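/- Quadratic lower bound for the expected check loss near the quantile: let τ ∈ (0,1) and let e be an integrable real random variable whose law has a density f with respect to Lebesgue measure such that f is continuous at 0, f(0) > 0, and P(e < 0) = τ. Then there exist constants c > 0 and δ > 0 such that E[ρ_τ(e − t)] − E[ρ_τ(e)] ≥ c·t² for all t with |t| ≤ δ. -/

import Mathlib

open MeasureTheory

noncomputable def rho (τ s : ℝ) : ℝ := s * (τ - if s < 0 then 1 else 0)

lemma rho_eq (τ s : ℝ) : rho τ s = τ * s + max (-s) 0 := by
  unfold rho
  rcases lt_or_ge s 0 with h | h
  · rw [if_pos h, max_eq_left (by linarith)]; ring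
  · rw [if_neg (not_lt.mpr h), max_eq_right (by linarith)]; ring

/-- Quadratic lower bound for the expected check loss near the quantile. -/
theorem expected_check_loss_quadratic_lower_bound (τ : ℝ) (hτ : τ ∈ Set.Ioo (0:ℝ) 1)
    (μ : Measure ℝ) [IsProbabilityMeasure μ] (f : ℝ → ℝ)
    (hf_nonneg : ∀ x, 0 ≤ f x)
    (hμ : μ = volume.withDensity (fun x => ENNReal.ofReal (f x)))
    (hf_cont : ContinuousAt f 0) (hf_pos : 0 < f 0)
    (hint : Integrable (fun x : ℝ => x) μ)
    (hq : μ (Set.Iio 0) = ENNReal.ofReal τ) :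
    ∃ c > (0:ℝ), ∃ δ > (0:ℝ), ∀ t : ℝ, |t| ≤ δ →
      c * t ^ 2 ≤ (∫ x, rho τ (x - t) ∂μ) - (∫ x, rho τ x ∂μ) := by
  obtain ⟨hτ0, hτ1⟩ := hτ
  -- get δ with f ≥ f 0 / 2 on [-δ, δ]
  obtain ⟨δ, hδpos, hδ⟩ : ∃ δ > (0:ℝ), ∀ x : ℝ, |x| ≤ δ → f 0 / 2 ≤ f x := by
    obtain ⟨ε, hε, h⟩ := Metric.continuousAt_iff.mp hf_cont (f 0 / 2) (by positivity)
    refine ⟨ε / 2, by positivity, fun x hx => ?_⟩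
    have hd : dist x 0 < ε := by
      rw [Real.dist_eq, sub_zero]; linarith [abs_nonneg x]
    have := h hd
    rw [Real.dist_eq] at this
    have := abs_lt.mp this
    linarith [this.1]
  refine ⟨f 0 / 8, by positivity, δ, hδpos, fun t ht => ?_⟩
  -- integrability facts
  have hI1 : Integrable (fun x => max (t - x) 0) μ := ((integrable_const t).sub hint).pos_part
  have hI2 : Integrable (fun x : ℝ => max (-x) 0) μ := hint.neg.pos_part
  have hRt : Integrable (fun x => rho τ (x - t)) μ := by
    have heq : (fun x => rho τ (x - t)) = fun x => (τ * x - τ * t) + max (t - x) 0 :=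
      funext fun x => by rw [rho_eq, neg_sub]; ring
    rw [heq]
    exact ((hint.const_mul τ).sub (integrable_const _)).add hI1
  have hR0 : Integrable (fun x => rho τ x) μ := by
    have heq : (fun x : ℝ => rho τ x) = fun x => τ * x + max (-x) 0 :=
      funext fun x => rho_eq τ x
    rw [heq]
    exact (hint.const_mul τ).add hI2
  -- key identity
  have key : (∫ x, rho τ (x - t) ∂μ) - ∫ x, rho τ x ∂μ
      = -(τ * t) + ∫ x, (max (t - x) 0 - max (-x) 0) ∂μ := by
    rw [← integral_sub hRt hR0]
    have heq : (fun x => rho τ (x - t) - rho τ x)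
        = fun x => -(τ * t) + (max (t - x) 0 - max (-x) 0) :=
      funext fun x => by rw [rho_eq, rho_eq, neg_sub]; ring
    have hg : Integrable (fun x => max (t - x) 0 - max (-x) 0) μ := hI1.sub hI2
    rw [heq, integral_add (integrable_const _) hg, integral_const]
    simp
  have hτR : (μ (Set.Iio 0)).toReal = τ := by
    rw [hq, ENNReal.toReal_ofReal hτ0.le]
  have hg : Integrable (fun x => max (t - x) 0 - max (-x) 0) μ := hI1.sub hI2
  rw [key]
  rcases lt_trichotomy t 0 with hneg | h0 | hpos
  · -- case t < 0
    have htδ : -t ≤ δ := by rwa [abs_of_neg hneg] at ht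
    set s : Set ℝ := Set.Ico (t / 2) 0 with hs
    have hsmeas : MeasurableSet s := measurableSet_Ico
    have hsub : ∀ x ∈ s, f 0 / 2 ≤ f x := by
      intro x hx
      obtain ⟨h1, h2⟩ := hx
      exact hδ x (abs_le.mpr ⟨by linarith, by linarith⟩)
    have hμs : ENNReal.ofReal (f 0 / 2 * (-t / 2)) ≤ μ s := by
      rw [hμ, withDensity_apply _ hsmeas]
      have h1 : ENNReal.ofReal (f 0 / 2 * (-t / 2))
          = ∫⁻ x in s, ENNReal.ofReal (f 0 / 2) ∂volume := by
        rw [setLIntegral_const, hs, Real.volume_Ico,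
          show (0 : ℝ) - t / 2 = -t / 2 by ring, ← ENNReal.ofReal_mul (by positivity : (0:ℝ) ≤ f 0 / 2)]
      rw [h1, ← lintegral_indicator hsmeas, ← lintegral_indicator hsmeas]
      apply lintegral_mono
      intro x
      by_cases hx : x ∈ s
      · simpa [Set.indicator_of_mem hx] using ENNReal.ofReal_le_ofReal (hsub x hx)
      · simp [Set.indicator_of_notMem hx]
    have hμsR : f 0 / 2 * (-t / 2) ≤ (μ s).toReal := by
      have h2 := ENNReal.toReal_mono (measure_ne_top μ s) hμs
      rwa [ENNReal.toReal_ofReal (by nlinarith : (0:ℝ) ≤ f 0 / 2 * (-t / 2))] at h2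
    set L : ℝ → ℝ := fun x => (Set.Iio (0:ℝ)).indicator (fun _ => t) x
      + s.indicator (fun _ => -t / 2) x with hL
    have hLint : Integrable L μ :=
      ((integrable_const t).indicator measurableSet_Iio).add
        ((integrable_const (-t / 2)).indicator hsmeas)
    have hLle : ∀ x, L x ≤ max (t - x) 0 - max (-x) 0 := by
      intro x
      rw [hL]
      dsimp only
      by_cases hx : x < 0
      · rw [Set.indicator_of_mem (by exact hx)]
        rw [max_eq_left (by linarith : (0:ℝ) ≤ -x)]
        by_cases hx2 : x ∈ s
        · rw [Set.indicator_of_mem hx2]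
          have h1 : t / 2 ≤ x := hx2.1
          have h2 := le_max_right (t - x) 0
          linarith
        · rw [Set.indicator_of_notMem hx2]
          have h2 := le_max_left (t - x) 0
          linarith
      · push_neg at hx
        rw [Set.indicator_of_notMem (by simpa using not_lt.mpr hx),
          Set.indicator_of_notMem (by simp [hs]; intro _; linarith)]
        rw [max_eq_right (by linarith : -x ≤ 0)]
        simpa using le_max_right (t - x) 0
    have hIL : ∫ x, L x ∂μ = t * τ + (-t / 2) * (μ s).toReal := by
      rw [hL, integral_add ((integrable_const t).indicator measurableSet_Iio)
        ((integrable_const (-t / 2)).indicator hsmeas),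
        integral_indicator_const _ measurableSet_Iio, integral_indicator_const _ hsmeas,
        measureReal_def, measureReal_def, hτR, smul_eq_mul, smul_eq_mul]
      ring
    have hmono := integral_mono hLint hg hLle
    rw [hIL] at hmono
    nlinarith [hμsR, hmono, mul_le_mul_of_nonneg_left hμsR (by linarith : (0:ℝ) ≤ -t / 2)]
  · simp [h0, zero_sub, neg_neg]
  · -- case t > 0
    have htδ : t ≤ δ := by rwa [abs_of_pos hpos] at ht
    set s : Set ℝ := Set.Icc (0:ℝ) (t / 2) with hs
    have hsmeas : MeasurableSet s := measurableSet_Icc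
    have hsub : ∀ x ∈ s, f 0 / 2 ≤ f x := by
      intro x hx
      obtain ⟨h1, h2⟩ := hx
      exact hδ x (abs_le.mpr ⟨by linarith, by linarith⟩)
    have hμs : ENNReal.ofReal (f 0 / 2 * (t / 2)) ≤ μ s := by
      rw [hμ, withDensity_apply _ hsmeas]
      have h1 : ENNReal.ofReal (f 0 / 2 * (t / 2))
          = ∫⁻ x in s, ENNReal.ofReal (f 0 / 2) ∂volume := by
        rw [setLIntegral_const, hs, Real.volume_Icc,
          show t / 2 - 0 = t / 2 by ring, ← ENNReal.ofReal_mul (by positivity)]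
      rw [h1, ← lintegral_indicator hsmeas, ← lintegral_indicator hsmeas]
      apply lintegral_mono
      intro x
      by_cases hx : x ∈ s
      · simpa [Set.indicator_of_mem hx] using ENNReal.ofReal_le_ofReal (hsub x hx)
      · simp [Set.indicator_of_notMem hx]
    have hμsR : f 0 / 2 * (t / 2) ≤ (μ s).toReal := by
      have h2 := ENNReal.toReal_mono (measure_ne_top μ s) hμs
      rwa [ENNReal.toReal_ofReal (by positivity)] at h2
    set L : ℝ → ℝ := fun x => (Set.Iio (0:ℝ)).indicator (fun _ => t) x
      + s.indicator (fun _ => t / 2) x with hL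
    have hLint : Integrable L μ :=
      ((integrable_const t).indicator measurableSet_Iio).add
        ((integrable_const (t / 2)).indicator hsmeas)
    have hLle : ∀ x, L x ≤ max (t - x) 0 - max (-x) 0 := by
      intro x
      rw [hL]
      dsimp only
      by_cases hx : x < 0
      · rw [Set.indicator_of_mem (by exact hx),
          Set.indicator_of_notMem (by simp [hs]; intro h; linarith)]
        rw [max_eq_left (by linarith : (0:ℝ) ≤ -x)]
        have h2 := le_max_left (t - x) 0
        linarith
      · push_neg at hx
        rw [Set.indicator_of_notMem (by simpa using not_lt.mpr hx)]
        rw [max_eq_right (by linarith : -x ≤ 0)]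
        by_cases hx2 : x ∈ s
        · rw [Set.indicator_of_mem hx2]
          have h1 : x ≤ t / 2 := hx2.2
          have h2 := le_max_left (t - x) 0
          linarith
        · rw [Set.indicator_of_notMem hx2]
          simpa using le_max_right (t - x) 0
    have hIL : ∫ x, L x ∂μ = t * τ + (t / 2) * (μ s).toReal := by
      rw [hL, integral_add ((integrable_const t).indicator measurableSet_Iio)
        ((integrable_const (t / 2)).indicator hsmeas),
        integral_indicator_const _ measurableSet_Iio, integral_indicator_const _ hsmeas,
        measureReal_def, measureReal_def, hτR, smul_eq_mul, smul_eq_mul]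
      ring
    have hmono := integral_mono hLint hg hLle
    rw [hIL] at hmono
    nlinarith [hμsR, hmono, mul_le_mul_of_nonneg_left hμsR (by linarith : (0:ℝ) ≤ t / 2)]
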